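/- Let A be a finite-dimensional k-algebra, and let σ and π be k-algebra automorphisms of A with σ inner. Then the twisted trivial extensions Δ_{σ∘π}A and Δ_πA are isomorphic as k-algebras. -/

import Mathlib

/-- The multiplication of the twisted trivial extension `Δ_τA = A ⊕ D(A)_τ`, modeled on
`A × (A →ₗ[k] k)`: `(a, f)(b, g) = (ab, a·g + f·b)`, where `D(A)_τ` carries the twisted
bimodule structure `(a·f·b)(x) = f(τ(b)xa)`, so `(a·g)(x) = g(xa)` and
`(f·b)(x) = f(τ(b)x)`.  Here `τ : A → A` is the twisting map. -/
def twTrivExtMul {k A : Type*} [Field k] [Ring A] [Algebra k A] (τ : A → A)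
    (p q : A × (A →ₗ[k] k)) : A × (A →ₗ[k] k) :=
  (p.1 * q.1, q.2 ∘ₗ LinearMap.mulRight k p.1 + p.2 ∘ₗ LinearMap.mulLeft k (τ q.1))

/-- Precomposition with left multiplication by a unit, as a linear equivalence. -/
def dualTwist {k A : Type*} [Field k] [Ring A] [Algebra k A] (u : Aˣ) :
    (A →ₗ[k] k) ≃ₗ[k] (A →ₗ[k] k) where
  toFun f := f ∘ₗ LinearMap.mulLeft k (u : A)
  invFun f := f ∘ₗ LinearMap.mulLeft k (↑u⁻¹ : A)
  map_add' f g := by ext x; simp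
  map_smul' c f := by ext x; simp
  left_inv f := by ext x; simp [mul_assoc, ← mul_assoc (u : A)]
  right_inv f := by ext x; simp [← mul_assoc]

/-- Let `A` be a finite-dimensional `k`-algebra, and let `σ` and `π` be
`k`-algebra automorphisms of `A` with `σ` inner.  Then the twisted trivial extensions
`Δ_{σ∘π}A` and `Δ_πA` are isomorphic as `k`-algebras. -/
theorem stmt_14 (k A : Type*) [Field k] [Ring A] [Algebra k A] [FiniteDimensional k A]
    (σ π : A ≃ₐ[k] A) (u : Aˣ) (hσ : ∀ a : A, σ a = (u : A) * a * (↑u⁻¹ : A)) :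
    -- there is a `k`-linear bijection `Φ : Δ_{σ∘π}A → Δ_πA` which is multiplicative and
    -- unital, i.e. a `k`-algebra isomorphism
    ∃ Φ : (A × (A →ₗ[k] k)) ≃ₗ[k] (A × (A →ₗ[k] k)),
      (∀ p q : A × (A →ₗ[k] k),
        Φ (twTrivExtMul (fun x => σ (π x)) p q) = twTrivExtMul (fun x => π x) (Φ p) (Φ q)) ∧
      Φ ((1 : A), (0 : A →ₗ[k] k)) = ((1 : A), (0 : A →ₗ[k] k)) := by
  refine ⟨(LinearEquiv.refl k A).prodCongr (dualTwist u), ?_, ?_⟩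
  · intro p q
    refine Prod.ext rfl ?_
    apply LinearMap.ext
    intro x
    simp only [twTrivExtMul, LinearEquiv.prodCongr_apply, dualTwist, LinearEquiv.refl_apply,
      LinearEquiv.coe_mk, LinearMap.add_apply, LinearMap.comp_apply,
      LinearMap.mulLeft_apply, LinearMap.mulRight_apply, LinearMap.coe_mk, AddHom.coe_mk]
    congr 1
    · rw [mul_assoc]
    · congr 1
      rw [hσ, mul_assoc, mul_assoc]
      simp [← mul_assoc]
  · refine Prod.ext rfl ?_
    apply LinearMap.ext
    intro x
    simp [dualTwist]
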